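/- Let X, Y ∈ M_2(ℂ) satisfy: X is positive semidefinite, Y is entrywise non-negative real, x_{1,1} = y_{1,1}, x_{2,2} = y_{2,2}, and |x_{1,2}|² ≤ y_{1,2}·y_{2,1}. Then (X, Y) is pairwise completely positive. -/

import Mathlib

open Finset
open scoped ComplexOrder

/-- A pair of matrices `(X, Y)` is pairwise completely positive (PCP) if there exist
finite families of vectors `v k, w k : Fin n → ℂ` with
`X = Σ_k (v_k ⊙ w_k)(v_k ⊙ w_k)^*` and `Y = Σ_k (v_k ⊙ conj v_k)(w_k ⊙ conj w_k)^*`. -/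
def IsPCP {n : ℕ} (X Y : Matrix (Fin n) (Fin n) ℂ) : Prop :=
  ∃ (m : ℕ) (v w : Fin m → Fin n → ℂ),
    (∀ i j, X i j = ∑ k, (v k i * w k i) * star (v k j * w k j)) ∧
    (∀ i j, Y i j = ∑ k, (v k i * star (v k i)) * star (w k j * star (w k j)))

lemma quad2 {X : Matrix (Fin 2) (Fin 2) ℂ} (hX : X.PosSemidef) (x0 x1 : ℂ) :
    0 ≤ X 0 0 * (x0 * star x0) + X 1 0 * (x0 * star x1) + X 0 1 * (x1 * star x0)
      + X 1 1 * (x1 * star x1) := by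
  have h := hX.dotProduct_mulVec_nonneg ![x0, x1]
  have e : dotProduct (star ![x0,x1]) (X.mulVec ![x0,x1])
      = X 0 0 * (x0 * star x0) + X 1 0 * (x0 * star x1) + X 0 1 * (x1 * star x0)
      + X 1 1 * (x1 * star x1) := by
    simp [dotProduct, Matrix.mulVec, Fin.sum_univ_two]
    ring
  rwa [e] at h

lemma csq {x : ℝ} (hx : 0 ≤ x) : ((Real.sqrt x : ℝ) : ℂ) * ((Real.sqrt x : ℝ) : ℂ) = (x : ℂ) := by
  norm_cast
  exact Real.mul_self_sqrt hx

lemma realify {z : ℂ} (h : 0 ≤ z) : z = ((z.re : ℝ) : ℂ) ∧ 0 ≤ z.re := by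
  rw [Complex.le_def] at h
  have him : z.im = 0 := by simpa using h.2.symm
  exact ⟨Complex.ext (by simp) (by simp [him]), by simpa using h.1⟩

theorem pcp_two_dim (X Y : Matrix (Fin 2) (Fin 2) ℂ)
    (hX : X.PosSemidef)
    (hY : ∀ i j, (Y i j).im = 0 ∧ 0 ≤ (Y i j).re)
    (h11 : X 0 0 = Y 0 0) (h22 : X 1 1 = Y 1 1)
    (h12 : ‖X 0 1‖ ^ 2 ≤ (Y 0 1).re * (Y 1 0).re) :
    IsPCP X Y := by
  set c := X 1 0 with hc
  have herm : X 0 1 = star c := (hX.1.apply 0 1).symm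
  obtain ⟨hXa, ha⟩ := realify (by simpa using quad2 hX 1 0)
  obtain ⟨hXd, hd⟩ := realify (by simpa using quad2 hX 0 1)
  set a := (X 0 0).re with hadef
  set d := (X 1 1).re with hddef
  set p := (Y 0 1).re with hpdef
  set q := (Y 1 0).re with hqdef
  have hp : 0 ≤ p := (hY 0 1).2
  have hq : 0 ≤ q := (hY 1 0).2
  have hYeq : ∀ i j, Y i j = ((Y i j).re : ℂ) :=
    fun i j => Complex.ext (by simp) (by simp [(hY i j).1])
  set nc := Complex.normSq c with hnc
  have hncpq : nc ≤ p * q := by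
    rw [herm, Complex.sq_norm, Complex.star_def, Complex.normSq_conj] at h12
    exact h12
  -- key : 0 ≤ a * a * d - a * nc
  have key : 0 ≤ a * a * d - a * nc := by
    have h := quad2 hX (-(star c)) (a : ℂ)
    have e : X 0 0 * (-(star c) * star (-(star c))) + X 1 0 * (-(star c) * star (a:ℂ))
        + X 0 1 * ((a:ℂ) * star (-(star c))) + X 1 1 * ((a:ℂ) * star (a:ℂ))
        = ((a * a * d - a * nc : ℝ) : ℂ) := by
      rw [hXa, hXd, herm]
      simp only [Complex.star_def, Complex.conj_ofReal, map_neg, map_one, Complex.conj_conj]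
      push_cast
      rw [hnc, Complex.normSq_eq_conj_mul_self]
      ring
    rw [e] at h
    exact (realify h).2.trans_eq (by simp)
  have hazero : a = 0 → c = 0 := by
    intro ha0
    by_contra hc0
    have hncpos : 0 < nc := Complex.normSq_pos.mpr hc0
    set s : ℝ := (d + 1) / (2 * nc) with hs
    have h := quad2 hX (-(s:ℂ) * star c) 1
    have e : X 0 0 * ((-(s:ℂ) * star c) * star (-(s:ℂ) * star c))
        + X 1 0 * ((-(s:ℂ) * star c) * star (1:ℂ))
        + X 0 1 * ((1:ℂ) * star (-(s:ℂ) * star c)) + X 1 1 * ((1:ℂ) * star (1:ℂ))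
        = ((d - 2 * s * nc : ℝ) : ℂ) := by
      rw [hXa, hXd, herm, ha0]
      simp only [Complex.star_def, Complex.conj_ofReal, map_neg, map_mul, map_one, Complex.conj_conj]
      push_cast
      rw [hnc, Complex.normSq_eq_conj_mul_self]
      ring
    rw [e] at h
    have h2 := (realify h).2
    simp only [Complex.ofReal_re] at h2
    rw [hs] at h2
    have : 2 * ((d + 1) / (2 * nc)) * nc = d + 1 := by field_simp
    nlinarith
  have hY01 : Y 0 1 = (p : ℂ) := hYeq 0 1
  have hY10 : Y 1 0 = (q : ℂ) := hYeq 1 0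
  have hY00 : Y 0 0 = (a : ℂ) := by rw [← h11, hXa]
  have hY11 : Y 1 1 = (d : ℂ) := by rw [← h22, hXd]
  by_cases hc0 : c = 0
  · refine ⟨4, ![![1,0],![1,0],![0,1],![0,1]],
      ![![(Real.sqrt a : ℂ), 0], ![0, (Real.sqrt p : ℂ)], ![0, (Real.sqrt d : ℂ)],
        ![(Real.sqrt q : ℂ), 0]], ?_, ?_⟩ <;>
      intro i j <;> fin_cases i <;> fin_cases j <;>
      simp [Fin.sum_univ_four, Matrix.vecHead, Matrix.vecTail, Complex.star_def,
        Complex.conj_ofReal, hXa, hXd, herm, ← hc, hc0,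
        hY00, hY01, hY10, hY11, csq ha, csq hd, csq hp, csq hq]
  · have hane : a ≠ 0 := fun h => hc0 (hazero h)
    have hapos : 0 < a := ha.lt_of_ne (Ne.symm hane)
    have hncpos : 0 < nc := Complex.normSq_pos.mpr hc0
    have hadnc : nc ≤ a * d := by nlinarith [key]
    have hppos : 0 < p := by
      rcases hp.lt_or_eq with h | h
      · exact h
      · exfalso; nlinarith
    have hq1 : 0 ≤ q - nc / p := by
      rw [sub_nonneg, div_le_iff₀ hppos]; nlinarith
    have hd1 : 0 ≤ d - nc / a := by
      rw [sub_nonneg, div_le_iff₀ hapos]; nlinarith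
    have hsane : ((Real.sqrt a : ℝ) : ℂ) ≠ 0 := by
      simpa using (Real.sqrt_pos.mpr hapos).ne'
    have hspane : ((Real.sqrt p : ℝ) : ℂ) ≠ 0 := by
      simpa using (Real.sqrt_pos.mpr hppos).ne'
    have hcc : c * (starRingEnd ℂ) c = ((nc : ℝ) : ℂ) := by rw [hnc]; exact Complex.mul_conj c
    have hpane : ((p : ℝ) : ℂ) ≠ 0 := by exact_mod_cast hppos.ne'
    have haane : ((a : ℝ) : ℂ) ≠ 0 := by exact_mod_cast hapos.ne'
    have hsa2 : ((Real.sqrt a : ℝ) : ℂ) ^ 2 = (a : ℂ) := by rw [sq]; exact csq ha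
    have hsp2 : ((Real.sqrt p : ℝ) : ℂ) ^ 2 = (p : ℂ) := by rw [sq]; exact csq hp
    have hs12 : ((Real.sqrt (q - nc / p) : ℝ) : ℂ) ^ 2 = ((q : ℂ) - nc / p) := by
      rw [sq, csq hq1]; push_cast; ring
    have hs22 : ((Real.sqrt (d - nc / a) : ℝ) : ℂ) ^ 2 = ((d : ℂ) - nc / a) := by
      rw [sq, csq hd1]; push_cast; ring
    have hQ : ((Real.sqrt (q - nc / p) : ℝ) : ℂ) * ((Real.sqrt (q - nc / p) : ℝ) : ℂ)
        = (q : ℂ) - (nc : ℂ) / (p : ℂ) := by rw [csq hq1]; push_cast; ring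
    have hD : ((Real.sqrt (d - nc / a) : ℝ) : ℂ) * ((Real.sqrt (d - nc / a) : ℝ) : ℂ)
        = (d : ℂ) - (nc : ℂ) / (a : ℂ) := by rw [csq hd1]; push_cast; ring
    have e1 : ∀ z : ℂ, z / ((Real.sqrt a : ℂ) * (Real.sqrt p : ℂ)) * (Real.sqrt p : ℂ)
        = z / (Real.sqrt a : ℂ) := fun z => by
      rw [div_mul_eq_mul_div, mul_comm ((Real.sqrt a : ℂ)) ((Real.sqrt p : ℂ)), ← div_div,
        mul_div_assoc, div_self hspane, mul_one]
    have e2 : ((Real.sqrt a : ℂ) * (Real.sqrt p : ℂ)) * ((Real.sqrt a : ℂ) * (Real.sqrt p : ℂ))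
        = (a : ℂ) * (p : ℂ) := by rw [mul_mul_mul_comm, csq ha, csq hp]
    refine ⟨2, ![![1, c / ((Real.sqrt a : ℂ) * (Real.sqrt p : ℂ))], ![0, 1]],
      ![![(Real.sqrt a : ℂ), (Real.sqrt p : ℂ)],
        ![((Real.sqrt (q - nc / p) : ℝ) : ℂ), ((Real.sqrt (d - nc / a) : ℝ) : ℂ)]], ?_, ?_⟩ <;>
      intro i j <;> fin_cases i <;> fin_cases j <;>
      simp only [Fin.sum_univ_two, Fin.isValue, Matrix.cons_val_zero, Matrix.cons_val_one,
        Matrix.head_cons, Matrix.vecHead, Matrix.vecTail, Complex.star_def, map_div₀, map_mul,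
        map_one, map_zero, Fin.mk_zero, Fin.mk_one, Complex.conj_ofReal, ← hc, hXa, hXd, herm,
        hY00, hY01, hY10, hY11, one_mul, mul_one, zero_mul, mul_zero, add_zero, zero_add,
        hQ, hD, csq ha, csq hp]
    · rw [e1, mul_comm, div_mul_cancel₀ _ hsane]
    · rw [e1, div_mul_cancel₀ _ hsane]
    · rw [e1, e1, div_mul_div_comm, hcc, csq ha]; ring
    · rw [div_mul_div_comm, hcc, e2, div_mul_eq_mul_div, mul_comm ((a:ℂ)) ((p:ℂ)),
        mul_div_mul_right _ _ haane]; ring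
    · rw [div_mul_div_comm, hcc, e2, div_mul_eq_mul_div,
        mul_div_mul_right _ _ hpane]; ring
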